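/- If Z follows a p-variate standard normal distribution, W follows a standard exponential distribution independent of Z, and Y = μ + Dξ̃W + √W D Σ̃^{1/2} Z with D a positive diagonal matrix and Σ̃ positive definite, then the characteristic function of Y is φ_Y(t) = exp(i t'μ) · (1 + (1/2) t'DΣ̃Dt − i t'Dξ̃)^{−1}. -/

import Mathlib

open MeasureTheory ProbabilityTheory Matrix Complex Real
open scoped NNReal ENNReal

open scoped ComplexOrder in
/-- The positive semidefinite square root of a positive semidefinite matrix
(the definition of `Matrix.PosSemidef.sqrt` in the older Mathlib, removed since). -/
noncomputable def Matrix.PosSemidef.sqrt {n 𝕜 : Type*} [Fintype n] [DecidableEq n] [RCLike 𝕜]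
    {A : Matrix n n 𝕜} (hA : A.PosSemidef) : Matrix n n 𝕜 :=
  hA.1.eigenvectorUnitary.1 * diagonal ((↑) ∘ (√·) ∘ hA.1.eigenvalues) *
  (star hA.1.eigenvectorUnitary : Matrix n n 𝕜)

lemma Matrix.PosSemidef.sqrt_isHermitian' {n : Type*} [Fintype n] [DecidableEq n]
    {A : Matrix n n ℝ} (hA : A.PosSemidef) : hA.sqrt.IsHermitian := by
  simp [Matrix.IsHermitian, Matrix.PosSemidef.sqrt, Matrix.conjTranspose_mul, Matrix.mul_assoc,
    Matrix.star_eq_conjTranspose, Matrix.conjTranspose_eq_transpose_of_trivial]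

lemma Matrix.PosSemidef.sqrt_mul_self' {n : Type*} [Fintype n] [DecidableEq n]
    {A : Matrix n n ℝ} (hA : A.PosSemidef) : hA.sqrt * hA.sqrt = A := by
  unfold Matrix.PosSemidef.sqrt
  set U := hA.1.eigenvectorUnitary
  calc (U.1 * diagonal ((↑) ∘ (√·) ∘ hA.1.eigenvalues) * (star U : Matrix n n ℝ)) *
        (U.1 * diagonal ((↑) ∘ (√·) ∘ hA.1.eigenvalues) * (star U : Matrix n n ℝ))
      = U.1 * (diagonal ((↑) ∘ (√·) ∘ hA.1.eigenvalues) * ((star U : Matrix n n ℝ) * U.1) *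
        diagonal ((↑) ∘ (√·) ∘ hA.1.eigenvalues)) * (star U : Matrix n n ℝ) := by
        simp only [Matrix.mul_assoc]
    _ = A := by
      rw [Unitary.coe_star_mul_self, Matrix.mul_one, diagonal_mul_diagonal]
      conv_rhs => rw [hA.1.spectral_theorem, Unitary.conjStarAlgAut_apply]
      simp [Real.mul_self_sqrt, hA.eigenvalues_nonneg]
      rfl

lemma gauss_one (a : ℝ) :
    ∫ x : ℝ, Complex.exp (Complex.I * ((a * x : ℝ) : ℂ)) ∂(gaussianReal 0 1)
      = Complex.exp (-(((a : ℂ)) ^ 2) / 2) := by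
  rw [gaussianReal_of_var_ne_zero _ one_ne_zero]
  have hpdf : gaussianPDF 0 1 = fun x => ((Real.toNNReal (gaussianPDFReal 0 1 x) : ℝ≥0) : ℝ≥0∞) := by
    ext x; simp [gaussianPDF, ENNReal.ofReal]
  rw [hpdf, integral_withDensity_eq_integral_smul
    ((measurable_gaussianPDFReal 0 1).real_toNNReal)]
  have h1 : ∀ x : ℝ, (Real.toNNReal (gaussianPDFReal 0 1 x)) • Complex.exp (Complex.I * ((a * x : ℝ) : ℂ))
      = ((Real.sqrt (2 * π))⁻¹ : ℂ) * Complex.exp ((-(1/2) : ℂ) * x ^ 2 + ((a : ℂ) * Complex.I) * x + 0) := by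
    intro x
    simp only [NNReal.smul_def, Real.coe_toNNReal _ (gaussianPDFReal_nonneg 0 1 x),
      Complex.real_smul]
    simp only [gaussianPDFReal, NNReal.coe_one, mul_one, sub_zero]
    rw [Complex.ofReal_mul, Complex.ofReal_inv, Complex.ofReal_exp, mul_assoc, ← Complex.exp_add]
    congr 1
    push_cast
    ring
  simp only [h1]
  rw [integral_const_mul, integral_cexp_quadratic (by norm_num : (-(1/2) : ℂ).re < 0)]
  have h2 : ((π : ℂ) / -(-(1/2))) ^ (1/2 : ℂ) = ((Real.sqrt (2 * π) : ℝ) : ℂ) := by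
    rw [Real.sqrt_eq_rpow]
    rw [show ((π : ℂ) / -(-(1/2))) = (((2 * π : ℝ) : ℂ)) by push_cast; ring]
    rw [Complex.ofReal_cpow (by positivity : (0:ℝ) ≤ 2 * π) ((1:ℝ)/2)]
    norm_num
  rw [h2]
  have h3 : ((Real.sqrt (2 * π) : ℝ) : ℂ) ≠ 0 := by
    simp only [ne_eq, Complex.ofReal_eq_zero]
    positivity
  rw [← mul_assoc, inv_mul_cancel₀ h3, one_mul]
  congr 1
  have : ((a : ℂ) * Complex.I) ^ 2 = -(a : ℂ) ^ 2 := by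
    rw [mul_pow, Complex.I_sq]; ring
  rw [this]
  ring

lemma gauss_pi {p : ℕ} (c : Fin p → ℝ) :
    ∫ z : Fin p → ℝ, Complex.exp (Complex.I * ((c ⬝ᵥ z : ℝ) : ℂ))
        ∂(Measure.pi fun _ => gaussianReal 0 1)
      = Complex.exp (-(((∑ i, (c i) ^ 2 : ℝ) : ℂ)) / 2) := by
  letI : MeasureSpace ℝ := ⟨gaussianReal 0 1⟩
  haveI : SigmaFinite (volume : Measure ℝ) :=
    @IsFiniteMeasure.toSigmaFinite _ _ _
      (inferInstanceAs (IsFiniteMeasure (gaussianReal 0 1)))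
  have h1 : ∀ z : Fin p → ℝ, Complex.exp (Complex.I * ((c ⬝ᵥ z : ℝ) : ℂ))
      = ∏ i, Complex.exp (Complex.I * ((c i * z i : ℝ) : ℂ)) := by
    intro z
    rw [← Complex.exp_sum]
    congr 1
    rw [dotProduct]
    push_cast
    rw [Finset.mul_sum]
  simp only [h1]
  have h2 : (Measure.pi fun _ : Fin p => gaussianReal 0 1) = (volume : Measure (Fin p → ℝ)) := rfl
  rw [h2]
  rw [MeasureTheory.integral_fintype_prod_volume_eq_prod
    (fun i x => Complex.exp (Complex.I * ((c i * x : ℝ) : ℂ)))]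
  have h3 : ∀ i, (∫ x : ℝ, Complex.exp (Complex.I * ((c i * x : ℝ) : ℂ)))
      = Complex.exp (-(((c i : ℂ)) ^ 2) / 2) := fun i => gauss_one (c i)
  simp only [h3]
  rw [← Complex.exp_sum]
  congr 1
  push_cast
  rw [← Finset.sum_div, ← Finset.sum_neg_distrib]

lemma exp_int (ζ : ℂ) (hζ : ζ.re < 1) :
    ∫ w : ℝ, Complex.exp (ζ * w) ∂(expMeasure 1) = (1 - ζ)⁻¹ := by
  have hζ1 : ζ - 1 ≠ 0 := by
    intro h
    have : ζ = 1 := by linear_combination h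
    simp [this] at hζ
  rw [expMeasure, gammaMeasure]
  have hpdf : gammaPDF 1 1 = fun x => ((Real.toNNReal (gammaPDFReal 1 1 x) : ℝ≥0) : ℝ≥0∞) := by
    ext x; simp [gammaPDF, ENNReal.ofReal]
  rw [hpdf, integral_withDensity_eq_integral_smul
    ((measurable_gammaPDFReal 1 1).real_toNNReal)]
  have h1 : ∀ x : ℝ, (Real.toNNReal (gammaPDFReal 1 1 x)) • Complex.exp (ζ * x)
      = Set.indicator (Set.Ici (0:ℝ)) (fun x => Complex.exp ((ζ - 1) * x)) x := by
    intro x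
    simp only [NNReal.smul_def, Real.coe_toNNReal _ (gammaPDFReal_nonneg one_pos one_pos x),
      Complex.real_smul]
    simp only [gammaPDFReal, Real.Gamma_one, sub_self, Real.rpow_zero, one_mul, div_one,
      one_pow, Real.rpow_one]
    by_cases hx : 0 ≤ x
    · rw [if_pos hx, Set.indicator_of_mem (Set.mem_Ici.mpr hx)]
      rw [Complex.ofReal_exp, ← Complex.exp_add]
      congr 1
      push_cast
      ring
    · rw [if_neg hx, Set.indicator_of_notMem (by simpa using hx)]
      simp
  simp only [h1]
  rw [integral_indicator measurableSet_Ici, integral_Ici_eq_integral_Ioi]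
  have D : ∀ x : ℝ, HasDerivAt (fun y : ℝ => Complex.exp ((ζ-1) * y) / (ζ-1))
      (Complex.exp ((ζ-1) * x)) x := by
    intro x
    conv => congr
    rw [← mul_div_cancel_right₀ (Complex.exp ((ζ-1) * x)) hζ1]
    apply ((Complex.hasDerivAt_exp _).comp x _).div_const (ζ-1)
    simpa only [mul_one, id_eq] using ((hasDerivAt_id (x : ℂ)).const_mul _).comp_ofReal
  have hint : IntegrableOn (fun x : ℝ => Complex.exp ((ζ-1) * x)) (Set.Ioi 0) := by
    have hb : 0 < 1 - ζ.re := by linarith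
    refine (Integrable.mono' ((exp_neg_integrableOn_Ioi 0 hb)) ?_ ?_)
    · exact (Complex.continuous_exp.comp (continuous_const.mul Complex.continuous_ofReal)).aestronglyMeasurable
    · filter_upwards with x
      rw [Complex.norm_exp]
      apply le_of_eq
      congr 1
      simp [Complex.mul_re]
  have htend : Filter.Tendsto (fun y : ℝ => Complex.exp ((ζ-1) * y) / (ζ-1))
      Filter.atTop (nhds 0) := by
    rw [show (0:ℂ) = 0 / (ζ-1) by simp]
    apply Filter.Tendsto.div_const
    rw [tendsto_zero_iff_norm_tendsto_zero]
    have heq : ∀ y : ℝ, ‖Complex.exp ((ζ-1) * y)‖ = Real.exp ((ζ.re - 1) * y) := by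
      intro y
      rw [Complex.norm_exp]
      congr 1
      simp [Complex.mul_re]
    simp only [heq]
    apply Real.tendsto_exp_atBot.comp
    have hb : ζ.re - 1 < 0 := by linarith
    exact Filter.Tendsto.const_mul_atTop_of_neg hb Filter.tendsto_id
  have hcont : ContinuousOn (fun y : ℝ => Complex.exp ((ζ-1) * y) / (ζ-1)) (Set.Ici 0) :=
    ((Complex.continuous_exp.comp (continuous_const.mul Complex.continuous_ofReal)).div_const _).continuousOn
  rw [MeasureTheory.integral_Ioi_of_hasDerivAt_of_tendsto (hcont 0 Set.self_mem_Ici) (fun x _ => D x) hint htend]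
  rw [Complex.ofReal_zero, mul_zero, Complex.exp_zero]
  rw [zero_sub]
  have h2 : (1:ℂ) - ζ ≠ 0 := by intro h; apply hζ1; linear_combination -h
  field_simp
  ring

lemma map_eq_pi {Ω : Type*} [MeasurableSpace Ω] (P : Measure Ω) [IsProbabilityMeasure P]
    {p : ℕ} (Z : Ω → Fin p → ℝ) (hZm : Measurable Z)
    (hZindep : iIndepFun (fun i ω => Z ω i) P)
    (hZgauss : ∀ i, Measure.map (fun ω => Z ω i) P = gaussianReal 0 1) :
    Measure.map Z P = Measure.pi (fun _ : Fin p => gaussianReal 0 1) := by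
  refine (Measure.pi_eq fun s hs => ?_).symm
  rw [Measure.map_apply hZm (MeasurableSet.univ_pi hs)]
  have h1 : Z ⁻¹' (Set.pi Set.univ s) = ⋂ i, (fun ω => Z ω i) ⁻¹' (s i) := by
    ext ω; simp [Set.mem_pi]
  rw [h1]
  have h2 := (iIndepFun_iff_measure_inter_preimage_eq_mul.mp hZindep) Finset.univ
    (fun i _ => hs i)
  simp only [Finset.mem_univ, forall_true_left] at h2
  simp only [Set.iInter_true] at h2
  rw [h2]
  congr 1
  ext i
  rw [← hZgauss i, Measure.map_apply (hZm.eval) (hs i)]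

open MeasureTheory ProbabilityTheory Matrix

/-- characteristic function of the MAL mixture
`Y = μ + Dξ̃ W + √W D Σ̃^{1/2} Z`. -/
theorem mal_charFun {Ω : Type*} [MeasurableSpace Ω] (P : Measure Ω) [IsProbabilityMeasure P]
    {p : ℕ} (μ ξ d : Fin p → ℝ) (hd : ∀ i, 0 < d i)
    (S : Matrix (Fin p) (Fin p) ℝ) (hS : S.PosDef)
    (D : Matrix (Fin p) (Fin p) ℝ) (hD : D = Matrix.diagonal d)
    (W : Ω → ℝ) (Z : Ω → Fin p → ℝ) (hWm : Measurable W) (hZm : Measurable Z)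
    (hW : Measure.map W P = expMeasure 1)
    (hZindep : iIndepFun (fun i ω => Z ω i) P)
    (hZgauss : ∀ i, Measure.map (fun ω => Z ω i) P = gaussianReal 0 1)
    (hWZ : IndepFun W Z P)
    (Y : Ω → Fin p → ℝ)
    (hY : ∀ ω, Y ω =
      μ + W ω • D.mulVec ξ + Real.sqrt (W ω) • (D * hS.posSemidef.sqrt).mulVec (Z ω)) :
    ∀ t : Fin p → ℝ,
      ∫ ω, Complex.exp (Complex.I * ((t ⬝ᵥ Y ω : ℝ) : ℂ)) ∂P
        = Complex.exp (Complex.I * ((t ⬝ᵥ μ : ℝ) : ℂ)) *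
          (1 + (1 / 2 : ℂ) * ((t ⬝ᵥ (D * S * D).mulVec t : ℝ) : ℂ)
            - Complex.I * ((t ⬝ᵥ D.mulVec ξ : ℝ) : ℂ))⁻¹ := by
  intro t
  set σ := hS.posSemidef.sqrt with hσdef
  set M := D * σ with hMdef
  set a : Fin p → ℝ := Matrix.vecMul t M with hadef
  set b : ℝ := t ⬝ᵥ D.mulVec ξ with hbdef
  set s : ℝ := ∑ i, (a i) ^ 2 with hsdef
  have hs_nonneg : 0 ≤ s := Finset.sum_nonneg fun i _ => sq_nonneg _
  -- matrix algebra: t ⬝ᵥ (D*S*D) t = s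
  have hσsymm : σᵀ = σ := by
    have h := hS.posSemidef.sqrt_isHermitian'
    simpa [Matrix.IsHermitian, Matrix.conjTranspose_eq_transpose_of_trivial] using h
  have hDsymm : Dᵀ = D := by rw [hD]; exact Matrix.diagonal_transpose d
  have hMM : M * Mᵀ = D * S * D := by
    rw [hMdef, Matrix.transpose_mul, hσsymm, hDsymm, ← hS.posSemidef.sqrt_mul_self']
    rw [← hσdef]
    noncomm_ring
  have hs_eq : (t ⬝ᵥ (D * S * D).mulVec t : ℝ) = s := by
    rw [← hMM, ← Matrix.mulVec_mulVec, Matrix.dotProduct_mulVec, ← hadef,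
      Matrix.mulVec_transpose, ← hadef, hsdef]
    simp [dotProduct, sq]
  -- rewrite the integrand
  have hdot : ∀ ω, (t ⬝ᵥ Y ω : ℝ) = t ⬝ᵥ μ + W ω * b + Real.sqrt (W ω) * (a ⬝ᵥ Z ω) := by
    intro ω
    rw [hY ω]
    simp only [dotProduct_add, dotProduct_smul, smul_eq_mul, hbdef,
      Matrix.dotProduct_mulVec, ← hMdef, ← hadef]
  set g : ℝ × (Fin p → ℝ) → ℂ := fun q =>
    Complex.exp (Complex.I * ((q.1 * b : ℝ) : ℂ)) *
      Complex.exp (Complex.I * ((Real.sqrt q.1 * (a ⬝ᵥ q.2) : ℝ) : ℂ)) with hgdef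
  have hg_cont : Continuous g := by
    apply Continuous.mul
    · apply Complex.continuous_exp.comp
      apply continuous_const.mul
      exact Complex.continuous_ofReal.comp (continuous_fst.mul continuous_const)
    · apply Complex.continuous_exp.comp
      apply continuous_const.mul
      apply Complex.continuous_ofReal.comp
      apply Continuous.mul
      · exact Real.continuous_sqrt.comp continuous_fst
      · show Continuous fun q : ℝ × (Fin p → ℝ) => ∑ i, a i * q.2 i
        exact continuous_finset_sum _ fun i _ =>
          continuous_const.mul ((continuous_apply i).comp continuous_snd)
  have hg_norm : ∀ q, ‖g q‖ ≤ 1 := by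
    intro q
    rw [hgdef]
    simp only [norm_mul, Complex.norm_exp]
    simp [Complex.mul_re]
  have hsplit : ∀ ω, Complex.exp (Complex.I * ((t ⬝ᵥ Y ω : ℝ) : ℂ))
      = Complex.exp (Complex.I * ((t ⬝ᵥ μ : ℝ) : ℂ)) * g (W ω, Z ω) := by
    intro ω
    rw [hdot ω, hgdef]
    push_cast
    rw [← Complex.exp_add, ← Complex.exp_add]
    congr 1
    ring
  simp only [hsplit]
  rw [integral_const_mul]
  congr 1
  -- now compute ∫ g(W, Z)
  have hmap : Measure.map (fun ω => (W ω, Z ω)) P = (expMeasure 1).prod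
      (Measure.pi fun _ : Fin p => gaussianReal 0 1) := by
    rw [← hW, ← map_eq_pi P Z hZm hZindep hZgauss]
    exact (indepFun_iff_map_prod_eq_prod_map_map hWm.aemeasurable hZm.aemeasurable).mp hWZ
  have hint : ∫ ω, g (W ω, Z ω) ∂P = ∫ q, g q ∂((expMeasure 1).prod
      (Measure.pi fun _ : Fin p => gaussianReal 0 1)) := by
    rw [← hmap, integral_map (hWm.prodMk hZm).aemeasurable hg_cont.aestronglyMeasurable]
  rw [hint]
  haveI : IsProbabilityMeasure (expMeasure 1) := isProbabilityMeasure_expMeasure one_pos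
  have hgi : Integrable g ((expMeasure 1).prod (Measure.pi fun _ : Fin p => gaussianReal 0 1)) :=
    (integrable_const (1:ℝ)).mono' hg_cont.aestronglyMeasurable
      (Filter.Eventually.of_forall (fun q => by simpa using hg_norm q))
  rw [MeasureTheory.integral_prod g hgi]
  -- inner integral
  have hinner : ∀ w : ℝ, ∫ z, g (w, z) ∂(Measure.pi fun _ : Fin p => gaussianReal 0 1)
      = Complex.exp (Complex.I * ((w * b : ℝ) : ℂ)) *
        Complex.exp (-(((Real.sqrt w) ^ 2 * s : ℝ) : ℂ) / 2) := by
    intro w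
    rw [hgdef]
    simp only
    rw [integral_const_mul]
    congr 1
    have hc : ∀ z : Fin p → ℝ, (Real.sqrt w * (a ⬝ᵥ z) : ℝ)
        = ((fun i => Real.sqrt w * a i) ⬝ᵥ z : ℝ) := by
      intro z
      simp [dotProduct, Finset.mul_sum, mul_assoc]
    simp only [hc]
    rw [gauss_pi (fun i => Real.sqrt w * a i)]
    have hsum : (∑ i, (Real.sqrt w * a i) ^ 2 : ℝ) = (Real.sqrt w) ^ 2 * s := by
      rw [hsdef, Finset.mul_sum]
      exact Finset.sum_congr rfl fun i _ => by ring
    rw [hsum]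
  simp only [hinner]
  -- a.e. w ≥ 0 under expMeasure
  have hae : ∀ᵐ w : ℝ ∂(expMeasure 1), 0 ≤ w := by
    rw [ae_iff]
    have hset : {w : ℝ | ¬ 0 ≤ w} = Set.Iio 0 := by ext w; simp
    rw [hset, expMeasure, gammaMeasure, withDensity_apply _ measurableSet_Iio]
    have hz : ∀ w ∈ Set.Iio (0:ℝ), gammaPDF 1 1 w = 0 := fun w hw => by
      simp [gammaPDF, gammaPDFReal, not_le.mpr (Set.mem_Iio.mp hw)]
    rw [setLIntegral_congr_fun measurableSet_Iio (show Set.EqOn (gammaPDF 1 1) (fun _ => 0) (Set.Iio 0) from hz)]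
    simp
  set ζ : ℂ := Complex.I * (b : ℂ) - (s : ℂ) / 2 with hζdef
  have hcongr : ∫ w : ℝ, Complex.exp (Complex.I * ((w * b : ℝ) : ℂ)) *
        Complex.exp (-(((Real.sqrt w) ^ 2 * s : ℝ) : ℂ) / 2) ∂(expMeasure 1)
      = ∫ w : ℝ, Complex.exp (ζ * w) ∂(expMeasure 1) := by
    apply integral_congr_ae
    filter_upwards [hae] with w hw
    rw [Real.sq_sqrt hw, ← Complex.exp_add, hζdef]
    congr 1
    push_cast
    ring
  rw [hcongr, exp_int ζ (by rw [hζdef]; simp [Complex.div_re]; nlinarith [hs_nonneg])]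
  congr 1
  rw [hζdef, hs_eq.symm, hbdef]
  push_cast
  ring
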